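/- arXiv:2405.18163 — 3 statements merged into one kernel-verified Lean document; each statement's English description precedes it below -/
import Mathlib

section
/- Let m₀, m₁ ∈ ℝⁿ and let Σ₀, Σ₁ be symmetric positive definite n×n real matrices such that Σ₀ - Σ₁ is positive semidefinite. Then a vector w ∈ ℝⁿ is a global minimizer of the ratio x ↦ f_{m₀,Σ₀}(x)/f_{m₁,Σ₁}(x), i.e. f_{m₀,Σ₀}(w)/f_{m₁,Σ₁}(w) ≤ f_{m₀,Σ₀}(x)/f_{m₁,Σ₁}(x) for all x ∈ ℝⁿ, if and only if Σ₁⁻¹(w - m₁) = Σ₀⁻¹(w - m₀). -/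
open Matrix MeasureTheory

/-- The multivariate Gaussian probability density function with mean `m` and
covariance matrix `S` on `ℝⁿ`. -/
noncomputable def gaussianPDF {n : ℕ} (m : Fin n → ℝ) (S : Matrix (Fin n) (Fin n) ℝ)
    (x : Fin n → ℝ) : ℝ :=
  (2 * Real.pi) ^ (-(n : ℝ) / 2) * S.det ^ (-(1 : ℝ) / 2) *
    Real.exp (-(1 / 2) * ((x - m) ⬝ᵥ (S⁻¹ *ᵥ (x - m))))

private lemma dot_symm {n : ℕ} {S : Matrix (Fin n) (Fin n) ℝ} (hS : S.IsHermitian)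
    (u v : Fin n → ℝ) : u ⬝ᵥ (S *ᵥ v) = v ⬝ᵥ (S *ᵥ u) := by
  rw [Matrix.dotProduct_mulVec, ← Matrix.mulVec_transpose,
    ← Matrix.conjTranspose_eq_transpose_of_trivial, hS.eq, dotProduct_comm]

private lemma quad_bound {n : ℕ} {S : Matrix (Fin n) (Fin n) ℝ} (hS : S.PosDef)
    (u a : Fin n → ℝ) :
    2 * (a ⬝ᵥ u) - a ⬝ᵥ (S *ᵥ a) ≤ u ⬝ᵥ (S⁻¹ *ᵥ u) := by
  have hinv : S *ᵥ (S⁻¹ *ᵥ u) = u := by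
    rw [Matrix.mulVec_mulVec, Matrix.mul_nonsing_inv _ (isUnit_iff_ne_zero.mpr hS.det_pos.ne'), Matrix.one_mulVec]
  have h0 : 0 ≤ (a - S⁻¹ *ᵥ u) ⬝ᵥ (S *ᵥ (a - S⁻¹ *ᵥ u)) := by
    have := hS.posSemidef.dotProduct_mulVec_nonneg (a - S⁻¹ *ᵥ u)
    simpa using this
  have hexp : (a - S⁻¹ *ᵥ u) ⬝ᵥ (S *ᵥ (a - S⁻¹ *ᵥ u)) =
      a ⬝ᵥ (S *ᵥ a) - 2 * (a ⬝ᵥ u) + u ⬝ᵥ (S⁻¹ *ᵥ u) := by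
    have h1 : (S⁻¹ *ᵥ u) ⬝ᵥ (S *ᵥ a) = a ⬝ᵥ u := by
      rw [dot_symm hS.isHermitian, hinv]
    have h2 : (S⁻¹ *ᵥ u) ⬝ᵥ u = u ⬝ᵥ (S⁻¹ *ᵥ u) := dotProduct_comm _ _
    rw [Matrix.mulVec_sub, sub_dotProduct, dotProduct_sub,
      dotProduct_sub, hinv, h1, h2]
    ring
  linarith

private lemma expand_quad {n : ℕ} {T : Matrix (Fin n) (Fin n) ℝ} (hT : T.IsHermitian)
    (x w m : Fin n → ℝ) :
    (x - m) ⬝ᵥ (T *ᵥ (x - m)) =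
      (x - w) ⬝ᵥ (T *ᵥ (x - w)) + 2 * ((x - w) ⬝ᵥ (T *ᵥ (w - m))) +
        (w - m) ⬝ᵥ (T *ᵥ (w - m)) := by
  have hx : x - m = (x - w) + (w - m) := by abel
  rw [hx, Matrix.mulVec_add, add_dotProduct, dotProduct_add,
    dotProduct_add, dot_symm hT (w - m) (x - w)]
  ring

private lemma inv_mono {n : ℕ} {S₀ S₁ : Matrix (Fin n) (Fin n) ℝ} (hS₀ : S₀.PosDef)
    (hS₁ : S₁.PosDef) (hdiff : (S₀ - S₁).PosSemidef) (u : Fin n → ℝ) :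
    u ⬝ᵥ (S₀⁻¹ *ᵥ u) ≤ u ⬝ᵥ (S₁⁻¹ *ᵥ u) := by
  set a := S₀⁻¹ *ᵥ u with ha
  have hinv : S₀ *ᵥ a = u := by
    rw [ha, Matrix.mulVec_mulVec, Matrix.mul_nonsing_inv _
      (isUnit_iff_ne_zero.mpr hS₀.det_pos.ne'), Matrix.one_mulVec]
  have e1 : u ⬝ᵥ (S₀⁻¹ *ᵥ u) = a ⬝ᵥ u := dotProduct_comm _ _
  have e2 : a ⬝ᵥ (S₀ *ᵥ a) = a ⬝ᵥ u := by rw [hinv]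
  have e3 : 0 ≤ a ⬝ᵥ (S₀ *ᵥ a) - a ⬝ᵥ (S₁ *ᵥ a) := by
    have := hdiff.dotProduct_mulVec_nonneg a
    simpa [Matrix.sub_mulVec, dotProduct_sub] using this
  have e4 := quad_bound hS₁ u a
  linarith

private lemma quad_iff {n : ℕ} (m₀ m₁ : Fin n → ℝ) (S₀ S₁ : Matrix (Fin n) (Fin n) ℝ)
    (hS₀ : S₀.PosDef) (hS₁ : S₁.PosDef) (hdiff : (S₀ - S₁).PosSemidef) (w : Fin n → ℝ) :
    (∀ x : Fin n → ℝ,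
        (x - m₀) ⬝ᵥ (S₀⁻¹ *ᵥ (x - m₀)) - (x - m₁) ⬝ᵥ (S₁⁻¹ *ᵥ (x - m₁)) ≤
          (w - m₀) ⬝ᵥ (S₀⁻¹ *ᵥ (w - m₀)) - (w - m₁) ⬝ᵥ (S₁⁻¹ *ᵥ (w - m₁))) ↔
      S₁⁻¹ *ᵥ (w - m₁) = S₀⁻¹ *ᵥ (w - m₀) := by
  set g := S₀⁻¹ *ᵥ (w - m₀) - S₁⁻¹ *ᵥ (w - m₁) with hg
  have hgiff : (S₁⁻¹ *ᵥ (w - m₁) = S₀⁻¹ *ᵥ (w - m₀)) ↔ g = 0 := by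
    rw [hg, sub_eq_zero, eq_comm]
  rw [hgiff]
  have hkey : ∀ x : Fin n → ℝ,
      (x - m₀) ⬝ᵥ (S₀⁻¹ *ᵥ (x - m₀)) - (x - m₁) ⬝ᵥ (S₁⁻¹ *ᵥ (x - m₁)) =
        ((x - w) ⬝ᵥ (S₀⁻¹ *ᵥ (x - w)) - (x - w) ⬝ᵥ (S₁⁻¹ *ᵥ (x - w)))
          + 2 * ((x - w) ⬝ᵥ g)
          + ((w - m₀) ⬝ᵥ (S₀⁻¹ *ᵥ (w - m₀)) - (w - m₁) ⬝ᵥ (S₁⁻¹ *ᵥ (w - m₁))) := by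
    intro x
    rw [expand_quad hS₀.inv.isHermitian x w m₀, expand_quad hS₁.inv.isHermitian x w m₁,
      hg, dotProduct_sub]
    ring
  constructor
  · intro h
    by_contra hgne
    have hgg : 0 < g ⬝ᵥ g := by
      rcases (Finset.sum_nonneg fun i _ => mul_self_nonneg (g i) :
          (0:ℝ) ≤ g ⬝ᵥ g).lt_or_eq with h' | h'
      · exact h'
      · exact absurd (dotProduct_self_eq_zero.mp h'.symm) hgne
    have hmono := inv_mono hS₀ hS₁ hdiff g
    have hpt : ∀ t : ℝ, t * (t * (g ⬝ᵥ (S₀⁻¹ *ᵥ g))) - t * (t * (g ⬝ᵥ (S₁⁻¹ *ᵥ g)))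
        + 2 * (t * (g ⬝ᵥ g)) ≤ 0 := by
      intro t
      have h1 := h (w + t • g)
      rw [hkey (w + t • g)] at h1
      have h2 : (w + t • g) - w = t • g := by abel
      rw [h2] at h1
      simp only [Matrix.mulVec_smul, smul_dotProduct, dotProduct_smul,
        smul_eq_mul] at h1
      linarith
    obtain ⟨A, hA⟩ : ∃ A, g ⬝ᵥ (S₀⁻¹ *ᵥ g) = A := ⟨_, rfl⟩
    obtain ⟨B, hB⟩ : ∃ B, g ⬝ᵥ (S₁⁻¹ *ᵥ g) = B := ⟨_, rfl⟩
    obtain ⟨G, hG⟩ : ∃ G, g ⬝ᵥ g = G := ⟨_, rfl⟩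
    rw [hA, hB, hG] at hpt
    rw [hA, hB] at hmono
    rw [hG] at hgg
    rcases hmono.lt_or_eq with hlt | heq
    · have htpos : 0 < G / (B - A) := div_pos hgg (by linarith)
      have heq2 : (G / (B - A)) * (G / (B - A)) * (B - A) = (G / (B - A)) * G := by
        rw [mul_assoc, div_mul_cancel₀ _ (by linarith : B - A ≠ 0)]
      linarith [hpt (G / (B - A)), heq2, mul_pos htpos hgg]
    · have := hpt 1
      rw [heq] at this
      linarith
  · intro hg0 x
    rw [hkey x, hg0]
    have := inv_mono hS₀ hS₁ hdiff (x - w)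
    simp only [dotProduct_zero, mul_zero, add_zero]
    linarith

/-- If `S₀ - S₁` is positive semidefinite, then `w` is a global minimizer
of `x ↦ f_{m₀,S₀}(x) / f_{m₁,S₁}(x)` iff `S₁⁻¹ (w - m₁) = S₀⁻¹ (w - m₀)`. -/
theorem ratio_isGlobalMin_iff {n : ℕ} (m₀ m₁ : Fin n → ℝ)
    (S₀ S₁ : Matrix (Fin n) (Fin n) ℝ) (hS₀ : S₀.PosDef) (hS₁ : S₁.PosDef)
    (hdiff : (S₀ - S₁).PosSemidef) (w : Fin n → ℝ) :
    (∀ x : Fin n → ℝ,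
        gaussianPDF m₀ S₀ w / gaussianPDF m₁ S₁ w ≤
          gaussianPDF m₀ S₀ x / gaussianPDF m₁ S₁ x) ↔
      S₁⁻¹ *ᵥ (w - m₁) = S₀⁻¹ *ᵥ (w - m₀) := by
  rw [← quad_iff m₀ m₁ S₀ S₁ hS₀ hS₁ hdiff w]
  have hP : (0:ℝ) < (2 * Real.pi) ^ (-(n : ℝ) / 2) :=
    Real.rpow_pos_of_pos (by positivity) _
  have hd₀ : (0:ℝ) < S₀.det ^ (-(1 : ℝ) / 2) := Real.rpow_pos_of_pos hS₀.det_pos _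
  have hd₁ : (0:ℝ) < S₁.det ^ (-(1 : ℝ) / 2) := Real.rpow_pos_of_pos hS₁.det_pos _
  have hrep : ∀ x : Fin n → ℝ, gaussianPDF m₀ S₀ x / gaussianPDF m₁ S₁ x =
      (S₀.det ^ (-(1 : ℝ) / 2) / S₁.det ^ (-(1 : ℝ) / 2)) *
        Real.exp (-(1 / 2) * ((x - m₀) ⬝ᵥ (S₀⁻¹ *ᵥ (x - m₀))
          - (x - m₁) ⬝ᵥ (S₁⁻¹ *ᵥ (x - m₁)))) := by
    intro x
    unfold gaussianPDF
    rw [show -(1 / 2) * ((x - m₀) ⬝ᵥ (S₀⁻¹ *ᵥ (x - m₀))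
          - (x - m₁) ⬝ᵥ (S₁⁻¹ *ᵥ (x - m₁)))
        = -(1 / 2) * ((x - m₀) ⬝ᵥ (S₀⁻¹ *ᵥ (x - m₀)))
          - -(1 / 2) * ((x - m₁) ⬝ᵥ (S₁⁻¹ *ᵥ (x - m₁))) by ring,
      Real.exp_sub]
    have e₁ : Real.exp (-(1 / 2) * ((x - m₁) ⬝ᵥ (S₁⁻¹ *ᵥ (x - m₁)))) ≠ 0 :=
      (Real.exp_pos _).ne'
    field_simp
  constructor
  · intro h x
    have h1 := h x
    rw [hrep w, hrep x, mul_le_mul_iff_right₀ (div_pos hd₀ hd₁), Real.exp_le_exp] at h1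
    linarith
  · intro h x
    rw [hrep w, hrep x, mul_le_mul_iff_right₀ (div_pos hd₀ hd₁), Real.exp_le_exp]
    have := h x
    linarith
end

section
/- Let m₀, m₁ ∈ ℝⁿ and let Σ₀, Σ₁ be symmetric positive definite n×n real matrices such that Σ₀ - Σ₁ is positive definite. Then the ratio x ↦ f_{m₀,Σ₀}(x)/f_{m₁,Σ₁}(x) attains its global minimum at a unique point w ∈ ℝⁿ, namely w = (Σ₁⁻¹ - Σ₀⁻¹)⁻¹ (Σ₁⁻¹ m₁ - Σ₀⁻¹ m₀). -/
open Matrix MeasureTheory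


section Aux

variable {n : ℕ}

private lemma swap_dot' (A : Matrix (Fin n) (Fin n) ℝ) (hA : A.IsHermitian) (u v : Fin n → ℝ) :
    u ⬝ᵥ A *ᵥ v = v ⬝ᵥ A *ᵥ u := by
  have hA' : Aᵀ = A := by simpa using hA.eq
  rw [dotProduct_mulVec, ← hA', vecMul_transpose, dotProduct_comm, hA']

private lemma cancel' (S : Matrix (Fin n) (Fin n) ℝ) (hS : S.PosDef) (x : Fin n → ℝ) :
    S *ᵥ (S⁻¹ *ᵥ x) = x := by
  rw [mulVec_mulVec, mul_nonsing_inv _ hS.det_pos.ne'.isUnit, one_mulVec]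

private lemma invDiff_posDef' (S₀ S₁ : Matrix (Fin n) (Fin n) ℝ) (hS₀ : S₀.PosDef)
    (hS₁ : S₁.PosDef) (hdiff : (S₀ - S₁).PosDef) : (S₁⁻¹ - S₀⁻¹).PosDef := by
  refine PosDef.of_dotProduct_mulVec_pos ((hS₁.inv.1).sub (hS₀.inv.1)) fun x hx => ?_
  simp only [star_trivial]
  set u := S₀⁻¹ *ᵥ x with hu_def
  set v := S₁⁻¹ *ᵥ x with hv_def
  have hu : S₀ *ᵥ u = x := cancel' S₀ hS₀ x
  have hv : S₁ *ᵥ v = x := cancel' S₁ hS₁ x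
  have hune : u ≠ 0 := fun h => hx (by rw [← hu, h, mulVec_zero])
  have h1 : x ⬝ᵥ S₀⁻¹ *ᵥ x = u ⬝ᵥ x := dotProduct_comm x u
  have e1 : u ⬝ᵥ S₁ *ᵥ v = u ⬝ᵥ x := by rw [hv]
  have e2 : v ⬝ᵥ S₁ *ᵥ u = u ⬝ᵥ x := by rw [swap_dot' S₁ hS₁.1, hv]
  have e3 : v ⬝ᵥ S₁ *ᵥ v = x ⬝ᵥ S₁⁻¹ *ᵥ x := by rw [hv, dotProduct_comm]
  have hd : (u - v) ⬝ᵥ S₁ *ᵥ (u - v)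
      = u ⬝ᵥ S₁ *ᵥ u - 2 * (u ⬝ᵥ x) + x ⬝ᵥ S₁⁻¹ *ᵥ x := by
    simp only [mulVec_sub, dotProduct_sub, sub_dotProduct, e1, e2, e3]
    ring
  have hpos0 : 0 ≤ (u - v) ⬝ᵥ S₁ *ᵥ (u - v) := by
    simpa using hS₁.posSemidef.dotProduct_mulVec_nonneg (u - v)
  have hup : 0 < u ⬝ᵥ S₀ *ᵥ u - u ⬝ᵥ S₁ *ᵥ u := by
    simpa [sub_mulVec, dotProduct_sub] using hdiff.dotProduct_mulVec_pos hune
  have hus : u ⬝ᵥ S₀ *ᵥ u = u ⬝ᵥ x := by rw [hu]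
  have hgoal : x ⬝ᵥ (S₁⁻¹ - S₀⁻¹) *ᵥ x = x ⬝ᵥ S₁⁻¹ *ᵥ x - u ⬝ᵥ x := by
    simp [sub_mulVec, dotProduct_sub, h1]
  rw [hgoal]
  linarith

private lemma quad_identity' (A₀ A₁ : Matrix (Fin n) (Fin n) ℝ) (hA₀ : A₀.IsHermitian)
    (hA₁ : A₁.IsHermitian) (m₀ m₁ w x : Fin n → ℝ)
    (hw : (A₁ - A₀) *ᵥ w = A₁ *ᵥ m₁ - A₀ *ᵥ m₀) :
    (x - m₀) ⬝ᵥ A₀ *ᵥ (x - m₀) - (x - m₁) ⬝ᵥ A₁ *ᵥ (x - m₁)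
      = (w - m₀) ⬝ᵥ A₀ *ᵥ (w - m₀) - (w - m₁) ⬝ᵥ A₁ *ᵥ (w - m₁)
        - (x - w) ⬝ᵥ (A₁ - A₀) *ᵥ (x - w) := by
  have hx1 : x ⬝ᵥ A₁ *ᵥ w - x ⬝ᵥ A₀ *ᵥ w = x ⬝ᵥ A₁ *ᵥ m₁ - x ⬝ᵥ A₀ *ᵥ m₀ := by
    have := congrArg (fun z => x ⬝ᵥ z) hw
    simpa [sub_mulVec, dotProduct_sub] using this
  have hw1 : w ⬝ᵥ A₁ *ᵥ w - w ⬝ᵥ A₀ *ᵥ w = w ⬝ᵥ A₁ *ᵥ m₁ - w ⬝ᵥ A₀ *ᵥ m₀ := by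
    have := congrArg (fun z => w ⬝ᵥ z) hw
    simpa [sub_mulVec, dotProduct_sub] using this
  have s1 : m₀ ⬝ᵥ A₀ *ᵥ x = x ⬝ᵥ A₀ *ᵥ m₀ := swap_dot' A₀ hA₀ m₀ x
  have s2 : m₁ ⬝ᵥ A₁ *ᵥ x = x ⬝ᵥ A₁ *ᵥ m₁ := swap_dot' A₁ hA₁ m₁ x
  have s3 : w ⬝ᵥ A₀ *ᵥ x = x ⬝ᵥ A₀ *ᵥ w := swap_dot' A₀ hA₀ w x
  have s4 : w ⬝ᵥ A₁ *ᵥ x = x ⬝ᵥ A₁ *ᵥ w := swap_dot' A₁ hA₁ w x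
  have s5 : m₀ ⬝ᵥ A₀ *ᵥ w = w ⬝ᵥ A₀ *ᵥ m₀ := swap_dot' A₀ hA₀ m₀ w
  have s6 : m₁ ⬝ᵥ A₁ *ᵥ w = w ⬝ᵥ A₁ *ᵥ m₁ := swap_dot' A₁ hA₁ m₁ w
  simp only [mulVec_sub, sub_mulVec, dotProduct_sub, sub_dotProduct, s1, s2, s3, s4, s5, s6]
  linear_combination 2 * hw1 - 2 * hx1

end Aux

/-- If `S₀ - S₁` is positive definite, then the ratio
`x ↦ f_{m₀,S₀}(x) / f_{m₁,S₁}(x)` attains its global minimum at the unique point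
`w = (S₁⁻¹ - S₀⁻¹)⁻¹ (S₁⁻¹ m₁ - S₀⁻¹ m₀)`. -/
theorem ratio_isGlobalMin_iff_eq_unique_point {n : ℕ} (m₀ m₁ : Fin n → ℝ)
    (S₀ S₁ : Matrix (Fin n) (Fin n) ℝ) (hS₀ : S₀.PosDef) (hS₁ : S₁.PosDef)
    (hdiff : (S₀ - S₁).PosDef) :
    ∀ w : Fin n → ℝ,
      (∀ x : Fin n → ℝ,
          gaussianPDF m₀ S₀ w / gaussianPDF m₁ S₁ w ≤
            gaussianPDF m₀ S₀ x / gaussianPDF m₁ S₁ x) ↔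
        w = (S₁⁻¹ - S₀⁻¹)⁻¹ *ᵥ (S₁⁻¹ *ᵥ m₁ - S₀⁻¹ *ᵥ m₀) := by

  intro w
  set A₀ : Matrix (Fin n) (Fin n) ℝ := S₀⁻¹ with hA₀def
  set A₁ : Matrix (Fin n) (Fin n) ℝ := S₁⁻¹ with hA₁def
  set B : Matrix (Fin n) (Fin n) ℝ := S₁⁻¹ - S₀⁻¹ with hBdef
  have hB : B.PosDef := invDiff_posDef' S₀ S₁ hS₀ hS₁ hdiff
  set g : (Fin n → ℝ) → ℝ :=
    fun x => (x - m₀) ⬝ᵥ A₀ *ᵥ (x - m₀) - (x - m₁) ⬝ᵥ A₁ *ᵥ (x - m₁) with hgdef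
  set w₀ : Fin n → ℝ := B⁻¹ *ᵥ (A₁ *ᵥ m₁ - A₀ *ᵥ m₀) with hw₀def
  have hw₀ : B *ᵥ w₀ = A₁ *ᵥ m₁ - A₀ *ᵥ m₀ := cancel' B hB _
  have hK : (0:ℝ) < S₀.det ^ (-(1 : ℝ) / 2) / S₁.det ^ (-(1 : ℝ) / 2) := by
    have h0 := hS₀.det_pos; have h1 := hS₁.det_pos
    positivity
  set K : ℝ := S₀.det ^ (-(1 : ℝ) / 2) / S₁.det ^ (-(1 : ℝ) / 2) with hKdef
  have hratio : ∀ x : Fin n → ℝ,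
      gaussianPDF m₀ S₀ x / gaussianPDF m₁ S₁ x = K * Real.exp (-(1 / 2) * g x) := by
    intro x
    have hπ : (0:ℝ) < (2 * Real.pi) ^ (-(n : ℝ) / 2) :=
      Real.rpow_pos_of_pos (by positivity) _
    unfold gaussianPDF
    rw [mul_div_mul_comm, mul_div_mul_left _ _ hπ.ne', ← Real.exp_sub]
    congr 1
    simp only [hgdef, hA₀def, hA₁def]
    ring
  have hquad : ∀ x : Fin n → ℝ, g x = g w₀ - (x - w₀) ⬝ᵥ B *ᵥ (x - w₀) := fun x =>
    quad_identity' A₀ A₁ hS₀.inv.1 hS₁.inv.1 m₀ m₁ w₀ x hw₀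
  clear hgdef
  clear_value g
  constructor
  · intro h
    have h2 := h w₀
    rw [hratio w, hratio w₀, mul_le_mul_iff_right₀ hK, Real.exp_le_exp] at h2
    have hgle : g w₀ ≤ g w := by linarith
    have hq : (w - w₀) ⬝ᵥ B *ᵥ (w - w₀) ≤ 0 := by
      have := hquad w; linarith
    by_contra hne
    have : 0 < (w - w₀) ⬝ᵥ B *ᵥ (w - w₀) := by
      simpa using hB.dotProduct_mulVec_pos (sub_ne_zero.mpr hne)
    linarith
  · intro h
    subst h
    intro x
    rw [hratio, hratio, mul_le_mul_iff_right₀ hK, Real.exp_le_exp]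
    have hq : 0 ≤ (x - w₀) ⬝ᵥ B *ᵥ (x - w₀) := by simpa using hB.posSemidef.dotProduct_mulVec_nonneg (x - w₀)
    have := hquad x
    nlinarith
end

section
/- Let m₀, m₁ ∈ ℝⁿ, let σᵢ > 0 and 0 < hᵢ ≤ 1 for i = 1,…,n with hⱼ < 1 for some j, and suppose that m₀ᵢ = m₁ᵢ whenever hᵢ = 1. Set Σ₀ = diag(σ₁²,…,σₙ²) and Σ₁ = diag(h₁σ₁²,…,hₙσₙ²). Then the ratio x ↦ f_{m₀,Σ₀}(x)/f_{m₁,Σ₁}(x) attains its global minimum c_opt over ℝⁿ, c_opt < 1, and a vector w ∈ ℝⁿ satisfies f_{m₀,Σ₀}(w) = c_opt · f_{m₁,Σ₁}(w) (equivalently, w is a root of the Diff-Gaussian function f_{c_opt}) if and only if wᵢ = (m₁ᵢ - hᵢ m₀ᵢ)/(1 - hᵢ) for every i with hᵢ < 1. -/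
open Matrix MeasureTheory

lemma gaussianPDF_diagonal {n : ℕ} (m d : Fin n → ℝ) (hd : ∀ i, d i ≠ 0) (x : Fin n → ℝ) :
    gaussianPDF m (Matrix.diagonal d) x =
      (2 * Real.pi) ^ (-(n : ℝ) / 2) * (∏ i, d i) ^ (-(1 : ℝ) / 2) *
        Real.exp (-(1 / 2) * ∑ i, (x i - m i) ^ 2 / d i) := by
  have hinv : (Matrix.diagonal d)⁻¹ = Matrix.diagonal (fun i => (d i)⁻¹) := by
    apply Matrix.inv_eq_right_inv
    rw [Matrix.diagonal_mul_diagonal]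
    convert Matrix.diagonal_one with i
    exact mul_inv_cancel₀ (hd i)
  unfold gaussianPDF
  rw [hinv, Matrix.det_diagonal]
  congr 2
  simp only [Matrix.mulVec_diagonal, dotProduct, Pi.sub_apply]
  congr 1
  exact Finset.sum_congr rfl fun i _ => by
    rw [pow_two, div_eq_mul_inv]; ring

/-- For diagonal covariances `Σ₀ = diag(σᵢ²)`, `Σ₁ = diag(hᵢσᵢ²)` with
`0 < hᵢ ≤ 1`, `hⱼ < 1` for some `j`, and `m₀ᵢ = m₁ᵢ` whenever `hᵢ = 1`, the ratio
`f_{m₀,Σ₀}/f_{m₁,Σ₁}` attains a global minimum `c_opt < 1`, and `w` is a root of the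
Diff-Gaussian `f_{c_opt}` iff `wᵢ = (m₁ᵢ - hᵢ m₀ᵢ)/(1-hᵢ)` for every `i` with `hᵢ < 1`. -/
theorem diffGaussian_root_characterization {n : ℕ} (m₀ m₁ : Fin n → ℝ)
    (σ h : Fin n → ℝ) (hσ : ∀ i, 0 < σ i) (hh0 : ∀ i, 0 < h i) (hh1 : ∀ i, h i ≤ 1)
    (hex : ∃ j : Fin n, h j < 1) (hmean : ∀ i, h i = 1 → m₀ i = m₁ i) :
    ∃ copt : ℝ,
      (∃ x₀ : Fin n → ℝ,
          gaussianPDF m₀ (Matrix.diagonal (fun i => σ i ^ 2)) x₀ /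
              gaussianPDF m₁ (Matrix.diagonal (fun i => h i * σ i ^ 2)) x₀ = copt ∧
          ∀ x : Fin n → ℝ,
            copt ≤ gaussianPDF m₀ (Matrix.diagonal (fun i => σ i ^ 2)) x /
                gaussianPDF m₁ (Matrix.diagonal (fun i => h i * σ i ^ 2)) x) ∧
      copt < 1 ∧
      ∀ w : Fin n → ℝ,
        gaussianPDF m₀ (Matrix.diagonal (fun i => σ i ^ 2)) w =
            copt * gaussianPDF m₁ (Matrix.diagonal (fun i => h i * σ i ^ 2)) w ↔
          ∀ i : Fin n, h i < 1 → w i = (m₁ i - h i * m₀ i) / (1 - h i) := by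
  have hσ2 : ∀ i, (0 : ℝ) < σ i ^ 2 := fun i => pow_pos (hσ i) 2
  have hd1 : ∀ i, (0 : ℝ) < h i * σ i ^ 2 := fun i => mul_pos (hh0 i) (hσ2 i)
  -- per-coordinate quadratic and its max
  set g : Fin n → ℝ → ℝ := fun i t =>
    (t - m₀ i) ^ 2 / σ i ^ 2 - (t - m₁ i) ^ 2 / (h i * σ i ^ 2) with hg
  set G : Fin n → ℝ := fun i => (m₁ i - m₀ i) ^ 2 / (σ i ^ 2 * (1 - h i)) with hG
  clear_value g G
  -- the identity in the case h i < 1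
  have hid : ∀ i t, h i < 1 →
      G i - g i t = ((1 - h i) / (h i * σ i ^ 2)) *
        (t - (m₁ i - h i * m₀ i) / (1 - h i)) ^ 2 := by
    intro i t hi
    have h1 : (1 : ℝ) - h i ≠ 0 := sub_ne_zero.mpr (ne_of_gt hi)
    have h2 : h i ≠ 0 := ne_of_gt (hh0 i)
    have h3 : σ i ^ 2 ≠ 0 := ne_of_gt (hσ2 i)
    simp only [hg, hG]
    field_simp
    ring
  have key : ∀ i t, g i t ≤ G i := by
    intro i t
    rcases eq_or_lt_of_le (hh1 i) with heq | hlt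
    · have hm : m₀ i = m₁ i := hmean i heq
      simp [hg, hG, hm, heq]
    · have hc : (0 : ℝ) < (1 - h i) / (h i * σ i ^ 2) :=
        div_pos (sub_pos.mpr hlt) (hd1 i)
      have h1 := hid i t hlt
      have h2 := mul_nonneg hc.le (sq_nonneg (t - (m₁ i - h i * m₀ i) / (1 - h i)))
      linarith
  have keyEq : ∀ i t, g i t = G i ↔ (h i < 1 → t = (m₁ i - h i * m₀ i) / (1 - h i)) := by
    intro i t
    rcases eq_or_lt_of_le (hh1 i) with heq | hlt
    · have hm : m₀ i = m₁ i := hmean i heq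
      constructor
      · intro _ hlt; exact absurd (heq ▸ hlt) (lt_irrefl 1)
      · intro _; simp [hg, hG, hm, heq]
    · have hc : (0 : ℝ) < (1 - h i) / (h i * σ i ^ 2) :=
        div_pos (sub_pos.mpr hlt) (hd1 i)
      constructor
      · intro he _
        have h0 : ((1 - h i) / (h i * σ i ^ 2)) *
            (t - (m₁ i - h i * m₀ i) / (1 - h i)) ^ 2 = 0 := by
          rw [← hid i t hlt, he]; ring
        have := (mul_eq_zero.mp h0).resolve_left (ne_of_gt hc)
        have := (pow_eq_zero_iff two_ne_zero).mp this
        linarith [sub_eq_zero.mp this]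
      · intro ht
        rw [ht hlt]
        have := hid i ((m₁ i - h i * m₀ i) / (1 - h i)) hlt
        simp at this
        linarith
  -- constants
  set K : ℝ := (2 * Real.pi) ^ (-(n : ℝ) / 2) with hK
  set P₀ : ℝ := (∏ i, σ i ^ 2) ^ (-(1 : ℝ) / 2) with hP0
  set P₁ : ℝ := (∏ i, h i * σ i ^ 2) ^ (-(1 : ℝ) / 2) with hP1
  have hKpos : 0 < K := Real.rpow_pos_of_pos (by positivity) _
  have hP0pos : 0 < P₀ := Real.rpow_pos_of_pos (Finset.prod_pos fun i _ => hσ2 i) _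
  have hP1pos : 0 < P₁ := Real.rpow_pos_of_pos (Finset.prod_pos fun i _ => hd1 i) _
  set R : ℝ := P₀ / P₁ with hR
  have hRpos : 0 < R := div_pos hP0pos hP1pos
  -- ratio formula
  have hratio : ∀ x : Fin n → ℝ,
      gaussianPDF m₀ (Matrix.diagonal (fun i => σ i ^ 2)) x /
        gaussianPDF m₁ (Matrix.diagonal (fun i => h i * σ i ^ 2)) x =
      R * Real.exp (-(1 / 2) * ∑ i, g i (x i)) := by
    intro x
    rw [gaussianPDF_diagonal m₀ _ (fun i => ne_of_gt (hσ2 i)) x,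
      gaussianPDF_diagonal m₁ _ (fun i => ne_of_gt (hd1 i)) x]
    rw [← hK, ← hP0, ← hP1]
    have hsum : ∑ i, g i (x i) =
        (∑ i, (x i - m₀ i) ^ 2 / σ i ^ 2) - ∑ i, (x i - m₁ i) ^ 2 / (h i * σ i ^ 2) := by
      rw [← Finset.sum_sub_distrib]
      simp only [hg]
    rw [hsum, hR]
    rw [mul_sub, Real.exp_sub]
    have hE1 : Real.exp (-(1 / 2) * ∑ i, (x i - m₁ i) ^ 2 / (h i * σ i ^ 2)) ≠ 0 :=
      Real.exp_ne_zero _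
    field_simp
  -- positivity of pdfs
  have hpos1 : ∀ x, 0 < gaussianPDF m₁ (Matrix.diagonal (fun i => h i * σ i ^ 2)) x := by
    intro x
    rw [gaussianPDF_diagonal m₁ _ (fun i => ne_of_gt (hd1 i)) x, ← hK, ← hP1]
    positivity
  -- optimum point
  set v : Fin n → ℝ := fun i =>
    if h i < 1 then (m₁ i - h i * m₀ i) / (1 - h i) else m₀ i with hv
  have hgv : ∀ i, g i (v i) = G i := by
    intro i
    rw [keyEq i (v i)]
    intro hi
    simp [hv, hi]
  set copt : ℝ := R * Real.exp (-(1 / 2) * ∑ i, G i) with hcopt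
  refine ⟨copt, ⟨v, ?_, ?_⟩, ?_, ?_⟩
  · rw [hratio v]
    have : ∑ i, g i (v i) = ∑ i, G i := Finset.sum_congr rfl fun i _ => hgv i
    rw [this]
  · intro x
    rw [hratio x]
    apply mul_le_mul_of_nonneg_left _ (le_of_lt hRpos)
    apply Real.exp_le_exp.mpr
    have : ∑ i, g i (x i) ≤ ∑ i, G i :=
      Finset.sum_le_sum fun i _ => key i (x i)
    linarith
  · -- copt < 1
    have hGnn : ∀ i, 0 ≤ G i := by
      intro i
      rcases eq_or_lt_of_le (hh1 i) with heq | hlt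
      · have hm : m₀ i = m₁ i := hmean i heq
        simp [hG, hm]
      · rw [hG]
        exact div_nonneg (sq_nonneg _) (le_of_lt (mul_pos (hσ2 i) (sub_pos.mpr hlt)))
    have hexp1 : Real.exp (-(1 / 2) * ∑ i, G i) ≤ 1 := by
      apply Real.exp_le_one_iff.mpr
      have : (0 : ℝ) ≤ ∑ i, G i := Finset.sum_nonneg fun i _ => hGnn i
      linarith
    have hR1 : R < 1 := by
      rw [hR, div_lt_one hP1pos, hP0, hP1]
      apply Real.rpow_lt_rpow_of_neg _ _ (by norm_num)
      · exact Finset.prod_pos fun i _ => hd1 i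
      · obtain ⟨j, hj⟩ := hex
        apply Finset.prod_lt_prod (fun i _ => hd1 i)
          (fun i _ => by nlinarith [hσ2 i, hh1 i])
        exact ⟨j, Finset.mem_univ j, by nlinarith [hσ2 j]⟩
    calc copt ≤ R * 1 := mul_le_mul_of_nonneg_left hexp1 (le_of_lt hRpos)
    _ = R := mul_one R
    _ < 1 := hR1
  · intro w
    have hne : gaussianPDF m₁ (Matrix.diagonal (fun i => h i * σ i ^ 2)) w ≠ 0 :=
      ne_of_gt (hpos1 w)
    rw [← div_eq_iff hne, hratio w, hcopt]
    constructor
    · intro he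
      have he2 : Real.exp (-(1 / 2) * ∑ i, g i (w i)) =
          Real.exp (-(1 / 2) * ∑ i, G i) :=
        mul_left_cancel₀ (ne_of_gt hRpos) he
      have he3 : ∑ i, g i (w i) = ∑ i, G i := by
        have := Real.exp_eq_exp.mp he2
        linarith
      intro i hi
      have : ∀ i ∈ Finset.univ, g i (w i) = G i :=
        (Finset.sum_eq_sum_iff_of_le fun i _ => key i (w i)).mp he3
      exact (keyEq i (w i)).mp (this i (Finset.mem_univ i)) hi
    · intro hw
      have : ∑ i, g i (w i) = ∑ i, G i :=
        Finset.sum_congr rfl fun i _ => (keyEq i (w i)).mpr (fun hi => hw i hi)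
      rw [this]
end
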